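/- Let X be a first countable topological space and A ⊆ C_p(X,[0,1]). If the closure of A in C_p(X) is not countably compact, then there exist sequences ⟨fₙ⟩ in A and ⟨xₘ⟩ in X and ultrafilters 𝒰, 𝒱 on ℕ with lim_{m→𝒱} xₘ existing in X, such that lim_{n→𝒰} lim_{m→𝒱} fₙ(xₘ) ≠ lim_{m→𝒱} lim_{n→𝒰} fₙ(xₘ). -/

import Mathlib

open Filter Topology

/-- The space `C_p(X)` of continuous real-valued functions on `X` with the
topology of pointwise convergence (inherited from the product topology). -/
def Cp (X : Type*) [TopologicalSpace X] : Type _ := {f : X → ℝ // Continuous f}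

instance (X : Type*) [TopologicalSpace X] : TopologicalSpace (Cp X) :=
  instTopologicalSpaceSubtype

/-- `p` is a limit point of `S`. -/
def IsLimitPt {Y : Type*} [TopologicalSpace Y] (S : Set Y) (p : Y) : Prop :=
  p ∈ closure (S \ {p})

/-- `A` is countably compact in the ambient space `Y`: every infinite subset of `A`
has a limit point in `Y`. -/
def CountablyCompactIn {Y : Type*} [TopologicalSpace Y] (A : Set Y) : Prop :=
  ∀ S ⊆ A, S.Infinite → ∃ p : Y, IsLimitPt S p

/-- if the closure of `A ⊆ C_p(X,[0,1])` in `C_p(X)` is not countably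
compact (X first countable), then the double ultralimit condition fails. -/
theorem stmt_4 {X : Type*} [TopologicalSpace X] [FirstCountableTopology X]
    (A : Set (Cp X)) (hA : ∀ f ∈ A, ∀ x, f.1 x ∈ Set.Icc (0:ℝ) 1)
    (hnc : ¬ CountablyCompactIn (Y := closure A) (Set.univ : Set (closure A))) :
    ∃ f : ℕ → Cp X, (∀ n, f n ∈ A) ∧ ∃ (x : ℕ → X) (𝒰 𝒱 : Ultrafilter ℕ) (y : X),
      Tendsto x ↑𝒱 (𝓝 y) ∧
      ∃ (g h : ℕ → ℝ) (α β : ℝ),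
        (∀ n, Tendsto (fun m => (f n).1 (x m)) ↑𝒱 (𝓝 (g n))) ∧
        Tendsto g ↑𝒰 (𝓝 α) ∧
        (∀ m, Tendsto (fun n => (f n).1 (x m)) ↑𝒰 (𝓝 (h m))) ∧
        Tendsto h ↑𝒱 (𝓝 β) ∧
        α ≠ β := by
  classical
  rw [CountablyCompactIn] at hnc
  push_neg at hnc
  obtain ⟨S, -, hSinf, hNoLim⟩ := hnc
  -- an injective sequence in S
  let u : ℕ ↪ S := hSinf.natEmbedding _
  set ψ : ℕ → Cp X := fun n => ((u n : (closure A : Set (Cp X))) : Cp X) with hψdef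
  have hψmem : ∀ n, ψ n ∈ closure A := fun n => (u n).1.2
  have hψinj : Function.Injective ψ := by
    intro a b hab
    have : (u a : (closure A : Set (Cp X))) = (u b : (closure A : Set (Cp X))) :=
      Subtype.ext hab
    exact u.injective (Subtype.ext this)
  -- the free ultrafilter 𝒰
  set 𝒰 : Ultrafilter ℕ := Ultrafilter.of cofinite with h𝒰def
  have hUcof : (𝒰 : Filter ℕ) ≤ cofinite := Ultrafilter.of_le _
  have hUat : (𝒰 : Filter ℕ) ≤ atTop := by rw [← Nat.cofinite_eq_atTop]; exact hUcof
  -- values of elements of closure A lie in [0,1]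
  have hval : ∀ g : Cp X, g ∈ closure A → ∀ x, g.1 x ∈ Set.Icc (0:ℝ) 1 := by
    intro g hg x
    have hev : Continuous (fun f : Cp X => f.1 x) :=
      (continuous_apply x).comp continuous_subtype_val
    have h1 : g.1 x ∈ closure ((fun f : Cp X => f.1 x) '' A) :=
      (image_closure_subset_closure_image hev) ⟨g, hg, rfl⟩
    have hsub : (fun f : Cp X => f.1 x) '' A ⊆ Set.Icc (0:ℝ) 1 := by
      rintro _ ⟨f, hf, rfl⟩; exact hA f hf x
    exact closure_minimal hsub isClosed_Icc h1
  -- pointwise ultralimit φ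
  have hex : ∀ x : X, ∃ c, c ∈ Set.Icc (0:ℝ) 1 ∧
      Tendsto (fun n => (ψ n).1 x) ↑𝒰 (𝓝 c) := by
    intro x
    have hle : (𝒰.map (fun n => (ψ n).1 x) : Filter ℝ) ≤ 𝓟 (Set.Icc (0:ℝ) 1) := by
      rw [le_principal_iff]
      exact Filter.mem_map.mpr (univ_mem' fun n => hval _ (hψmem n) x)
    obtain ⟨c, hc, hlim⟩ := isCompact_Icc.ultrafilter_le_nhds (𝒰.map _) hle
    exact ⟨c, hc, hlim⟩
  set φ : X → ℝ := fun x => (hex x).choose with hφdef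
  have hφIcc : ∀ x, φ x ∈ Set.Icc (0:ℝ) 1 := fun x => (hex x).choose_spec.1
  have hφlim : ∀ x, Tendsto (fun n => (ψ n).1 x) ↑𝒰 (𝓝 (φ x)) :=
    fun x => (hex x).choose_spec.2
  -- φ is not continuous
  have hφcont : ¬ Continuous φ := by
    intro hc
    set Φ : Cp X := ⟨φ, hc⟩ with hΦdef
    have hten : Tendsto ψ ↑𝒰 (𝓝 Φ) := by
      refine tendsto_subtype_rng.mpr ?_
      rw [tendsto_pi_nhds]
      exact fun x => hφlim x
    have hΦmem : Φ ∈ closure A :=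
      isClosed_closure.mem_of_tendsto hten (Eventually.of_forall hψmem)
    set p : (closure A : Set (Cp X)) := ⟨Φ, hΦmem⟩ with hpdef
    apply hNoLim p
    rw [IsLimitPt, closure_subtype]
    apply mem_closure_of_tendsto hten
    -- all but at most one n have ψ n ≠ Φ
    have hfin : {n | ψ n = Φ}.Finite := by
      apply Set.Subsingleton.finite
      intro a ha b hb
      exact hψinj (ha.trans hb.symm)
    have hcof : {n | ψ n ≠ Φ} ∈ (𝒰 : Filter ℕ) := by
      apply hUcof
      rw [mem_cofinite]
      have : {n | ¬ψ n = Φ}ᶜ = {n | ψ n = Φ} := by ext n; simp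
      rwa [this]
    filter_upwards [hcof] with n hn
    refine ⟨(u n : (closure A : Set (Cp X))), ⟨(u n).2, ?_⟩, rfl⟩
    intro hcontra
    apply hn
    have : ((u n : (closure A : Set (Cp X))) : Cp X) = (p : Cp X) := by
      rw [hcontra]
    exact this
  -- get a point of discontinuity and a sequence witnessing it
  rw [continuous_iff_continuousAt] at hφcont
  push_neg at hφcont
  obtain ⟨x₀, hx₀⟩ := hφcont
  rw [ContinuousAt, tendsto_iff_seq_tendsto] at hx₀
  push_neg at hx₀
  obtain ⟨x, hxt, hnot⟩ := hx₀
  rw [Metric.tendsto_atTop] at hnot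
  push_neg at hnot
  obtain ⟨ε, hε, hfreq⟩ := hnot
  set T : Set ℕ := {m | ε ≤ dist (φ (x m)) (φ x₀)} with hTdef
  have hTinf : T.Infinite := by
    rw [← Filter.frequently_cofinite_iff_infinite, Nat.cofinite_eq_atTop, frequently_atTop]
    intro N
    obtain ⟨n, hn1, hn2⟩ := hfreq N
    exact ⟨n, hn1, hn2⟩
  have hne : (cofinite ⊓ 𝓟 T).NeBot := by
    rw [← frequently_mem_iff_neBot, Filter.frequently_cofinite_iff_infinite]
    simpa using hTinf
  set 𝒱 : Ultrafilter ℕ := Ultrafilter.of (cofinite ⊓ 𝓟 T) with h𝒱def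
  have h𝒱le : (𝒱 : Filter ℕ) ≤ cofinite ⊓ 𝓟 T := Ultrafilter.of_le _
  have hT𝒱 : T ∈ (𝒱 : Filter ℕ) := (h𝒱le.trans inf_le_right) (mem_principal_self T)
  have hxV : Tendsto x ↑𝒱 (𝓝 x₀) := by
    apply hxt.mono_left
    rw [← Nat.cofinite_eq_atTop]
    exact h𝒱le.trans inf_le_left
  -- approximation of elements of closure A on finite sets
  have happrox : ∀ (g : Cp X), g ∈ closure A → ∀ (s : Finset X) (δ : ℝ), 0 < δ →
      ∃ f ∈ A, ∀ q ∈ s, |f.1 q - g.1 q| < δ := by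
    intro g hg s δ hδ
    have hopen : IsOpen {f : Cp X | ∀ q ∈ s, |f.1 q - g.1 q| < δ} := by
      have heq : {f : Cp X | ∀ q ∈ s, |f.1 q - g.1 q| < δ} =
          ⋂ q ∈ s, {f : Cp X | |f.1 q - g.1 q| < δ} := by
        ext f; simp
      rw [heq]
      refine isOpen_biInter_finset fun q _ => ?_
      have hev : Continuous (fun f : Cp X => |f.1 q - g.1 q|) := by
        apply Continuous.abs
        exact (((continuous_apply q).comp continuous_subtype_val).sub continuous_const)
      exact isOpen_lt hev continuous_const
    have hmemg : g ∈ {f : Cp X | ∀ q ∈ s, |f.1 q - g.1 q| < δ} := by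
      intro q _; simpa using hδ
    obtain ⟨f, hfo, hfA⟩ := mem_closure_iff.mp hg _ hopen hmemg
    exact ⟨f, hfA, hfo⟩
  -- choose the approximating sequence in A
  have hchoice : ∀ n : ℕ, ∃ f ∈ A,
      ∀ q ∈ insert x₀ ((Finset.range (n+1)).image x), |f.1 q - (ψ n).1 q| < 1/((n:ℝ)+1) :=
    fun n => happrox (ψ n) (hψmem n) _ _ (by positivity)
  choose f hfA hfapp using hchoice
  -- squeeze: f n agrees with ψ n in the 𝒰-limit at good points
  have key : ∀ (pt : X), (∀ᶠ n in (𝒰 : Filter ℕ), |(f n).1 pt - (ψ n).1 pt| < 1/((n:ℝ)+1)) →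
      Tendsto (fun n => (f n).1 pt) ↑𝒰 (𝓝 (φ pt)) := by
    intro pt hev
    have h0 : Tendsto (fun n : ℕ => (f n).1 pt - (ψ n).1 pt) ↑𝒰 (𝓝 0) := by
      apply squeeze_zero_norm' (a := fun n : ℕ => 1/((n:ℝ)+1))
      · filter_upwards [hev] with n hn
        rw [Real.norm_eq_abs]; exact le_of_lt hn
      · exact tendsto_one_div_add_atTop_nhds_zero_nat.mono_left hUat
    have := (hφlim pt).add h0
    simp only [add_zero] at this
    convert this using 2 with n
    ring
  refine ⟨f, hfA, x, 𝒰, 𝒱, x₀, hxV, fun n => (f n).1 x₀, fun m => φ (x m), φ x₀, ?_⟩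
  -- β : the 𝒱-ultralimit of φ ∘ x
  have hβex : ∃ β, β ∈ Set.Icc (0:ℝ) 1 ∧
      Tendsto (fun m => φ (x m)) ↑𝒱 (𝓝 β) := by
    have hle : (𝒱.map (fun m => φ (x m)) : Filter ℝ) ≤ 𝓟 (Set.Icc (0:ℝ) 1) := by
      rw [le_principal_iff]
      exact Filter.mem_map.mpr (univ_mem' fun m => hφIcc (x m))
    obtain ⟨c, hc, hlim⟩ := isCompact_Icc.ultrafilter_le_nhds (𝒱.map _) hle
    exact ⟨c, hc, hlim⟩
  obtain ⟨β, -, hβ⟩ := hβex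
  refine ⟨β, ?_, ?_, ?_, hβ, ?_⟩
  · -- g n = f n x₀ is the 𝒱-limit over m of f n (x m)
    intro n
    exact ((f n).2.tendsto x₀).comp hxV
  · -- Tendsto g 𝒰 (𝓝 (φ x₀))
    apply key x₀
    apply Eventually.of_forall
    intro n
    exact hfapp n x₀ (Finset.mem_insert_self _ _)
  · -- h m = φ (x m) is the 𝒰-limit over n of f n (x m)
    intro m
    apply key (x m)
    have : ∀ᶠ n in (𝒰 : Filter ℕ), m ≤ n := hUat (eventually_ge_atTop m)
    filter_upwards [this] with n hn
    apply hfapp n (x m)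
    apply Finset.mem_insert_of_mem
    exact Finset.mem_image_of_mem x (Finset.mem_range.mpr (Nat.lt_succ_of_le hn))
  · -- φ x₀ ≠ β
    have hdist : Tendsto (fun m => dist (φ (x m)) (φ x₀)) ↑𝒱 (𝓝 (dist β (φ x₀))) :=
      hβ.dist tendsto_const_nhds
    have hεle : ε ≤ dist β (φ x₀) := by
      apply ge_of_tendsto hdist
      filter_upwards [hT𝒱] with m hm
      exact hm
    intro hcontra
    rw [← hcontra, dist_self] at hεle
    linarith
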